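/- Suppose (ω, F) is a Ramsey algebra. Then for every infinite sequence a in ω and every indexed collection {A_n}_{n∈ω} of subsets of ω, there exists an infinite sequence b which is a reduction of a with respect to F such that for each n ∈ ω, the set FR_F(b−n) of finite reductions of the tail b−n is either contained in or disjoint from A_n. -/

import Mathlib

/-- An operation on `ω` of arity `op.1`, represented as a function on lists
(its values on lists of length `op.1` are the relevant ones). -/
abbrev NatOp : Type := ℕ × (List ℕ → ℕ)

/-- `toFun op` is `op` viewed as a genuine `op.1`-ary operation on `ω`. -/
def NatOp.toFun (op : NatOp) : (Fin op.1 → ℕ) → ℕ := fun x => op.2 (List.ofFn x)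

/-- `applyOps [h₁,…,hₘ] l` splits `l` into consecutive blocks of lengths given by the
arities of the `hᵢ` and returns the list `[h₁(block₁), …, hₘ(blockₘ)]`. -/
def applyOps : List NatOp → List ℕ → List ℕ
  | [], _ => []
  | h :: hs, l => h.2 (l.take h.1) :: applyOps hs (l.drop h.1)

/-- The orderly terms over `F`: the smallest collection of operations on `ω` including
`F`, containing the (unary) identity, and closed under orderly composition
`f(x̄₁,…,x̄ₙ) = g(h₁(x̄₁),…,hₙ(x̄ₙ))`. -/
inductive OrderlyTerm (F : Set NatOp) : NatOp → Prop where
  | base {op : NatOp} (h : op ∈ F) : OrderlyTerm F op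
  | id : OrderlyTerm F (1, fun l => l.headI)
  | comp {g : NatOp} (hs : List NatOp) (hg : OrderlyTerm F g)
      (hhs : ∀ h ∈ hs, OrderlyTerm F h) (hlen : g.1 = hs.length) :
      OrderlyTerm F ((hs.map Prod.fst).sum, fun l => g.2 (applyOps hs l))

/-- `FRset F a`: the set of finite reductions of the infinite sequence `a` with respect
to `F`, i.e. all values `f(a i₁, …, a iₘ)` of orderly terms `f` over `F` on finite
subsequences `a i₁, …, a iₘ` (with `i₁ < ⋯ < iₘ`) of `a`. -/
def FRset (F : Set NatOp) (a : ℕ → ℕ) : Set ℕ :=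
  {z | ∃ op : NatOp, OrderlyTerm F op ∧
    ∃ l : List ℕ, l.Chain' (· < ·) ∧ l.length = op.1 ∧ op.2 (l.map a) = z}

/-- `b` is a reduction of `a` with respect to `F` (`b ≤_F a`): each `b n` is obtained by
applying an orderly term over `F` to a finite block of terms of `a`, the blocks being
disjoint, consecutive, and in increasing order of index. -/
def IsReduction (F : Set NatOp) (b a : ℕ → ℕ) : Prop :=
  ∃ ops : ℕ → NatOp, ∃ idx : ℕ → List ℕ,
    (∀ n, OrderlyTerm F (ops n)) ∧
    (∀ n, (idx n).length = (ops n).1) ∧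
    (∀ n, (idx n).Chain' (· < ·)) ∧
    (∀ n m : ℕ, n < m → ∀ x ∈ idx n, ∀ y ∈ idx m, x < y) ∧
    ∀ n, b n = (ops n).2 ((idx n).map a)

/-- `(ω, F)` is a Ramsey algebra: for every infinite sequence `a` and every `X ⊆ ω`
there is a reduction `b ≤_F a` with `FR_F(b) ⊆ X` or `FR_F(b) ∩ X = ∅`. -/
def IsRamseyAlg (F : Set NatOp) : Prop :=
  ∀ (a : ℕ → ℕ) (X : Set ℕ), ∃ b : ℕ → ℕ, IsReduction F b a ∧
    (FRset F b ⊆ X ∨ Disjoint (FRset F b) X)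

namespace Stmt15Aux


lemma mem_le_foldr_max {l : List ℕ} {x : ℕ} (hx : x ∈ l) : x ≤ l.foldr max 0 := by
  induction l with
  | nil => simp at hx
  | cons a l ih =>
    rcases List.mem_cons.1 hx with rfl | h
    · exact le_max_left _ _
    · exact le_trans (ih h) (le_max_right _ _)

lemma chain'_flatMap {idx : ℕ → List ℕ} {l : List ℕ} (hl : l.Pairwise (· < ·))
    (h1 : ∀ j, (idx j).Chain' (· < ·))
    (h2 : ∀ j j', j < j' → ∀ x ∈ idx j, ∀ y ∈ idx j', x < y) :
    (l.flatMap idx).Chain' (· < ·) := by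
  induction l with
  | nil => exact List.isChain_nil
  | cons j l ih =>
    rw [List.flatMap_cons]
    show List.IsChain (· < ·) (idx j ++ l.flatMap idx)
    rw [List.isChain_iff_pairwise, List.pairwise_append]
    refine ⟨List.isChain_iff_pairwise.1 (h1 j),
      List.isChain_iff_pairwise.1 (ih hl.of_cons), ?_⟩
    intro x hx y hy
    obtain ⟨j', hj', hy'⟩ := List.mem_flatMap.1 hy
    exact h2 j j' (List.rel_of_pairwise_cons hl hj') x hx y hy'

lemma applyOps_flatMap (a b : ℕ → ℕ) (ops : ℕ → NatOp) (idx : ℕ → List ℕ)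
    (hlen : ∀ n, (idx n).length = (ops n).1)
    (hval : ∀ n, b n = (ops n).2 ((idx n).map a)) :
    ∀ l : List ℕ, applyOps (l.map ops) ((l.flatMap idx).map a) = l.map b := by
  intro l
  induction l with
  | nil => simp [applyOps]
  | cons j l ih =>
    rw [List.map_cons, List.flatMap_cons, List.map_append, List.map_cons]
    simp only [applyOps]
    rw [List.take_left' (by simp [hlen j]), List.drop_left' (by simp [hlen j]), ih, ← hval j]

lemma flatMap_length_eq (ops2 : ℕ → NatOp) (idx2 : ℕ → List ℕ)
    (hlen : ∀ n, (idx2 n).length = (ops2 n).1) (l : List ℕ) :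
    (l.flatMap idx2).length = (((l.map ops2).map Prod.fst)).sum := by
  rw [List.length_flatMap, List.map_map]
  exact congrArg List.sum (List.map_congr_left fun j _ => hlen j)

lemma exists_bound (idx : ℕ → List ℕ)
    (hcross : ∀ n m, n < m → ∀ x ∈ idx n, ∀ y ∈ idx m, x < y) (B : ℕ) :
    ∃ J, ∀ j, J ≤ j → ∀ x ∈ idx j, B < x := by
  have key : ∀ B : ℕ, ∃ J, ∀ j, J ≤ j → ∀ x ∈ idx j, B ≤ x := by
    intro B
    induction B with
    | zero => exact ⟨0, fun j _ x _ => Nat.zero_le x⟩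
    | succ B ih =>
      obtain ⟨J, hJ⟩ := ih
      by_cases hex : ∃ j, J ≤ j ∧ B ∈ idx j
      · obtain ⟨j0, _, hB⟩ := hex
        exact ⟨j0 + 1, fun j hj x hx => hcross j0 j (by omega) B hB x hx⟩
      · refine ⟨J, fun j hj x hx => ?_⟩
        have h1 := hJ j hj x hx
        have h2 : x ≠ B := fun e => hex ⟨j, hj, e ▸ hx⟩
        omega
  obtain ⟨J, hJ⟩ := key (B + 1)
  exact ⟨J, fun j hj x hx => hJ j hj x hx⟩











structure ValidW (F : Set NatOp) (b a : ℕ → ℕ) (ops : ℕ → NatOp) (idx : ℕ → List ℕ) : Prop where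
  orderly : ∀ n, OrderlyTerm F (ops n)
  len : ∀ n, (idx n).length = (ops n).1
  chain : ∀ n, (idx n).Chain' (· < ·)
  cross : ∀ n m, n < m → ∀ x ∈ idx n, ∀ y ∈ idx m, x < y
  val : ∀ n, b n = (ops n).2 ((idx n).map a)

def compW (ops1 : ℕ → NatOp) (idx1 : ℕ → List ℕ) (ops2 : ℕ → NatOp) (idx2 : ℕ → List ℕ) :
    (ℕ → NatOp) × (ℕ → List ℕ) :=
  ⟨fun n => ((((idx1 n).map ops2).map Prod.fst).sum,
      fun l => (ops1 n).2 (applyOps ((idx1 n).map ops2) l)),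
   fun n => (idx1 n).flatMap idx2⟩

lemma valid_compW {F : Set NatOp} {c b a : ℕ → ℕ} {ops1 ops2 : ℕ → NatOp}
    {idx1 idx2 : ℕ → List ℕ}
    (h1 : ValidW F c b ops1 idx1) (h2 : ValidW F b a ops2 idx2) :
    ValidW F c a (compW ops1 idx1 ops2 idx2).1 (compW ops1 idx1 ops2 idx2).2 := by
  simp only [compW]
  refine ⟨?_, ?_, ?_, ?_, ?_⟩
  · intro n
    exact OrderlyTerm.comp ((idx1 n).map ops2) (h1.orderly n)
      (fun g hg => by obtain ⟨j, _, rfl⟩ := List.mem_map.1 hg; exact h2.orderly j)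
      (by rw [List.length_map]; exact (h1.len n).symm)
  · intro n; exact flatMap_length_eq ops2 idx2 h2.len (idx1 n)
  · intro n
    exact chain'_flatMap (List.isChain_iff_pairwise.1 (h1.chain n)) h2.chain h2.cross
  · intro n m hnm x hx y hy
    obtain ⟨j, hj, hx'⟩ := List.mem_flatMap.1 hx
    obtain ⟨j', hj', hy'⟩ := List.mem_flatMap.1 hy
    exact h2.cross j j' (h1.cross n m hnm j hj j' hj') x hx' y hy'
  · intro n
    rw [h1.val n, ← applyOps_flatMap a b ops2 idx2 h2.len h2.val (idx1 n)]

lemma ValidW.frSubset {F : Set NatOp} {b a : ℕ → ℕ} {ops : ℕ → NatOp} {idx : ℕ → List ℕ}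
    (h : ValidW F b a ops idx) : FRset F b ⊆ FRset F a := by
  rintro z ⟨op, hop, l, hchain, hlen, hval⟩
  refine ⟨(((l.map ops).map Prod.fst).sum, fun t => op.2 (applyOps (l.map ops) t)),
    ?_, l.flatMap idx, ?_, ?_, ?_⟩
  · exact OrderlyTerm.comp (l.map ops) hop
      (fun g hg => by obtain ⟨j, _, rfl⟩ := List.mem_map.1 hg; exact h.orderly j)
      (by rw [List.length_map]; exact hlen.symm)
  · exact chain'_flatMap (List.isChain_iff_pairwise.1 hchain) h.chain h.cross
  · exact flatMap_length_eq ops idx h.len l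
  · show op.2 (applyOps (l.map ops) ((l.flatMap idx).map a)) = z
    rw [applyOps_flatMap a b ops idx h.len h.val l, hval]

lemma valid_id (F : Set NatOp) (c : ℕ → ℕ) :
    ValidW F c c (fun _ => (1, fun l => l.headI)) (fun n => [n]) := by
  refine ⟨fun _ => OrderlyTerm.id, fun _ => rfl, fun _ => List.isChain_singleton _, ?_, fun _ => rfl⟩
  intro n m hnm x hx y hy
  simp only [List.mem_singleton] at hx hy
  omega

variable (F : Set NatOp) (a : ℕ → ℕ) (As : ℕ → Set ℕ)

noncomputable def chA (hF : IsRamseyAlg F) : ℕ → ℕ → ℕ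
  | 0 => a
  | n + 1 => (hF (chA hF n) (As n)).choose

lemma chA_zero (hF : IsRamseyAlg F) : chA F a As hF 0 = a := by rw [chA]

lemma chA_spec (hF : IsRamseyAlg F) (n : ℕ) :
    IsReduction F (chA F a As hF (n + 1)) (chA F a As hF n) ∧
      (FRset F (chA F a As hF (n + 1)) ⊆ As n ∨
        Disjoint (FRset F (chA F a As hF (n + 1))) (As n)) := by
  have h : chA F a As hF (n + 1) = (hF (chA F a As hF n) (As n)).choose := by rw [chA]
  rw [h]
  exact (hF (chA F a As hF n) (As n)).choose_spec

noncomputable def wit (hF : IsRamseyAlg F) (n : ℕ) : (ℕ → NatOp) × (ℕ → List ℕ) :=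
  ⟨(chA_spec F a As hF n).1.choose, (chA_spec F a As hF n).1.choose_spec.choose⟩

lemma wit_valid (hF : IsRamseyAlg F) (n : ℕ) :
    ValidW F (chA F a As hF (n + 1)) (chA F a As hF n) (wit F a As hF n).1 (wit F a As hF n).2 := by
  obtain ⟨h1, h2, h3, h4, h5⟩ := (chA_spec F a As hF n).1.choose_spec.choose_spec
  exact ⟨h1, h2, h3, h4, h5⟩

noncomputable def V (hF : IsRamseyAlg F) (k : ℕ) : ℕ → (ℕ → NatOp) × (ℕ → List ℕ)
  | 0 => ⟨fun _ => (1, fun l => l.headI), fun n => [n]⟩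
  | d + 1 => compW (wit F a As hF (k + d)).1 (wit F a As hF (k + d)).2
      (V hF k d).1 (V hF k d).2

lemma V_valid (hF : IsRamseyAlg F) (k d : ℕ) :
    ValidW F (chA F a As hF (k + d)) (chA F a As hF k)
      (V F a As hF k d).1 (V F a As hF k d).2 := by
  induction d with
  | zero => rw [V]; exact valid_id F _
  | succ d ih => rw [V]; exact valid_compW (wit_valid F a As hF (k + d)) ih


end Stmt15Aux

/-- Iterated Ramsey property: a single reduction handles countably many sets at once
(via tails). Here `b − n` is the sequence `fun i => b (i + n)`. -/
theorem stmt15 (F : Set NatOp) (hF : IsRamseyAlg F) (a : ℕ → ℕ) (As : ℕ → Set ℕ) :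
    ∃ b : ℕ → ℕ, IsReduction F b a ∧
      ∀ n : ℕ, FRset F (fun i => b (i + n)) ⊆ As n ∨
        Disjoint (FRset F (fun i => b (i + n))) (As n) := by
  classical
  have hVv : ∀ k d, Stmt15Aux.ValidW F (Stmt15Aux.chA F a As hF (k + d)) (Stmt15Aux.chA F a As hF k)
      (Stmt15Aux.V F a As hF k d).1 (Stmt15Aux.V F a As hF k d).2 := Stmt15Aux.V_valid F a As hF
  -- uniform largeness of blocks
  have Hgood : ∀ (B m : ℕ), ∃ j, ∀ k d, k + d = m + 1 →
      ∀ x ∈ (Stmt15Aux.V F a As hF k d).2 j, B < x := by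
    intro B m
    have main : ∀ K, ∃ J, ∀ k, k ≤ K → ∀ j, J ≤ j →
        ∀ x ∈ (Stmt15Aux.V F a As hF k (m + 1 - k)).2 j, B < x := by
      intro K
      induction K with
      | zero =>
        obtain ⟨J, hJ⟩ := Stmt15Aux.exists_bound _ (hVv 0 (m + 1)).cross B
        refine ⟨J, fun k hk => ?_⟩
        have : k = 0 := Nat.le_zero.1 hk
        subst this
        exact hJ
      | succ K ih =>
        obtain ⟨J1, h1⟩ := ih
        obtain ⟨J2, h2⟩ := Stmt15Aux.exists_bound _ (hVv (K + 1) (m + 1 - (K + 1))).cross B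
        refine ⟨max J1 J2, fun k hk j hj x hx => ?_⟩
        rcases Nat.lt_or_ge k (K + 1) with h | h
        · exact h1 k (by omega) j (le_trans (le_max_left _ _) hj) x hx
        · have : k = K + 1 := by omega
          subst this
          exact h2 j (le_trans (le_max_right _ _) hj) x hx
    obtain ⟨J, hJ⟩ := main (m + 1)
    refine ⟨J, fun k d hkd x hx => ?_⟩
    have hk : k ≤ m + 1 := by omega
    have hd : d = m + 1 - k := by omega
    subst hd
    exact hJ k hk J le_rfl x hx
  choose jj hjj using Hgood
  -- max of blocks function
  obtain ⟨Mx, hMx⟩ : ∃ Mx : ℕ → ℕ → ℕ, ∀ m j k d, k + d = m + 1 →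
      ∀ x ∈ (Stmt15Aux.V F a As hF k d).2 j, x ≤ Mx m j := by
    refine ⟨fun m j => ((List.range (m + 2)).map
      (fun k => ((Stmt15Aux.V F a As hF k (m + 1 - k)).2 j).foldr max 0)).foldr max 0,
      fun m j k d hkd x hx => ?_⟩
    have hd : d = m + 1 - k := by omega
    subst hd
    refine le_trans (Stmt15Aux.mem_le_foldr_max hx) (Stmt15Aux.mem_le_foldr_max ?_)
    exact List.mem_map.2 ⟨k, List.mem_range.2 (by omega), rfl⟩
  -- diagonal choice of positions and running bounds
  obtain ⟨G, hG0, hGs⟩ : ∃ G : ℕ → ℕ × ℕ, G 0 = (jj 0 0, Mx 0 (jj 0 0)) ∧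
      ∀ m, G (m + 1) = (jj (G m).2 (m + 1), max (G m).2 (Mx (m + 1) (jj (G m).2 (m + 1)))) :=
    ⟨fun m => Nat.rec (jj 0 0, Mx 0 (jj 0 0))
      (fun m p => (jj p.2 (m + 1), max p.2 (Mx (m + 1) (jj p.2 (m + 1))))) m, rfl, fun _ => rfl⟩
  have hmono : ∀ m, (G m).2 ≤ (G (m + 1)).2 := by
    intro m; rw [hGs]; exact le_max_left _ _
  have hmono' : ∀ m m', m ≤ m' → (G m).2 ≤ (G m').2 := by
    intro m m' h
    induction h with
    | refl => exact le_rfl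
    | step _ ih => exact le_trans ih (hmono _)
  have hUB : ∀ m k d, k + d = m + 1 →
      ∀ x ∈ (Stmt15Aux.V F a As hF k d).2 (G m).1, x ≤ (G m).2 := by
    intro m
    cases m with
    | zero =>
      intro k d h x hx
      rw [hG0] at hx ⊢
      exact hMx 0 (jj 0 0) k d h x hx
    | succ m =>
      intro k d h x hx
      rw [hGs] at hx ⊢
      exact le_trans (hMx (m + 1) (jj (G m).2 (m + 1)) k d h x hx) (le_max_right _ _)
  have hLB : ∀ m k d, k + d = m + 2 →
      ∀ x ∈ (Stmt15Aux.V F a As hF k d).2 (G (m + 1)).1, (G m).2 < x := by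
    intro m k d h x hx
    rw [hGs] at hx
    exact hjj (G m).2 (m + 1) k d (by omega) x hx
  have hCr : ∀ m m', m < m' → ∀ k d d', k + d = m + 1 → k + d' = m' + 1 →
      ∀ x ∈ (Stmt15Aux.V F a As hF k d).2 (G m).1,
      ∀ y ∈ (Stmt15Aux.V F a As hF k d').2 (G m').1, x < y := by
    intro m m' hmm' k d d' hd hd' x hx y hy
    obtain ⟨t, rfl⟩ : ∃ t, m' = t + 1 := ⟨m' - 1, by omega⟩
    have h1 : x ≤ (G m).2 := hUB m k d hd x hx
    have h2 : (G t).2 < y := hLB t k d' (by omega) y hy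
    have h3 : (G m).2 ≤ (G t).2 := hmono' m t (by omega)
    omega
  -- the diagonal sequence
  have key : ∀ k n', k ≤ n' + 1 →
      Stmt15Aux.ValidW F (fun i => Stmt15Aux.chA F a As hF (i + n' + 1) (G (i + n')).1)
        (Stmt15Aux.chA F a As hF k)
        (fun i => (Stmt15Aux.V F a As hF k (i + n' + 1 - k)).1 (G (i + n')).1)
        (fun i => (Stmt15Aux.V F a As hF k (i + n' + 1 - k)).2 (G (i + n')).1) := by
    intro k n' hk
    refine ⟨fun i => (hVv k (i + n' + 1 - k)).orderly _,
      fun i => (hVv k (i + n' + 1 - k)).len _,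
      fun i => (hVv k (i + n' + 1 - k)).chain _, ?_, ?_⟩
    · intro i i' hii' x hx y hy
      exact hCr (i + n') (i' + n') (by omega) k (i + n' + 1 - k) (i' + n' + 1 - k)
        (by omega) (by omega) x hx y hy
    · intro i
      have hv := (hVv k (i + n' + 1 - k)).val (G (i + n')).1
      have e : k + (i + n' + 1 - k) = i + n' + 1 := by omega
      rw [e] at hv
      exact hv
  refine ⟨fun m => Stmt15Aux.chA F a As hF (m + 1) (G m).1, ?_, ?_⟩
  · obtain ⟨h1, h2, h3, h4, h5⟩ := key 0 0 (by omega)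
    refine ⟨_, _, h1, h2, h3, h4, fun n => ?_⟩
    have h := h5 n
    rw [Stmt15Aux.chA_zero F a As hF] at h
    exact h
  · intro n
    have hsub : FRset F (fun i => Stmt15Aux.chA F a As hF (i + n + 1) (G (i + n)).1) ⊆
        FRset F (Stmt15Aux.chA F a As hF (n + 1)) :=
      (key (n + 1) n (by omega)).frSubset
    rcases (Stmt15Aux.chA_spec F a As hF n).2 with h | h
    · exact Or.inl (hsub.trans h)
    · exact Or.inr (Disjoint.mono_left hsub h)
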